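/- Uniform convergence of H_c to H_∞ over windows (Lemma 2, deterministic form). Assume additionally: (i) sup_n sup_{0 ≤ t₁ ≤ t₂ ≤ T_{n+1} − T_n} ∑_{i=m(T_n+t₁)}^{m(T_n+t₂)−1} α(i)·L_b(Y_{i+1}) < ∞; and (ii) there exists x₀ ∈ ℝ^d with sup_n sup_{t ∈ [0,T]} ‖∑_{i=m(T_n)}^{m(T_n+t)−1} α(i)·b(x₀, Y_{i+1})‖ < ∞. Then for every compact set B ⊆ ℝ^d, lim_{c→∞} sup_{x ∈ B} sup_n sup_{t ∈ [0,T]} ‖∑_{i=m(T_n)}^{m(T_n+t)−1} α(i)·(H_c(x, Y_{i+1}) − H_∞(x, Y_{i+1}))‖ = 0. -/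
import Mathlib


open Filter

theorem uniform_convergence_Hc_to_Hinf_over_windows
    {E : Type*} [NormedAddCommGroup E] [NormedSpace ℝ E] [FiniteDimensional ℝ E]
    [Nontrivial E]
    {𝓨 : Type*}
    (α : ℕ → ℝ)
    (hα_pos : ∀ n, 0 < α n)
    (hα_anti : ∀ n, α (n + 1) ≤ α n)
    (hα_div : Tendsto (fun n => ∑ i ∈ Finset.range n, α i) atTop atTop)
    (hα_to0 : Tendsto α atTop (nhds 0))
    (t : ℕ → ℝ) (ht : ∀ n, t n = ∑ i ∈ Finset.range n, α i)
    (m : ℝ → ℕ)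
    (hm_le : ∀ s : ℝ, 0 ≤ s → t (m s) ≤ s)
    (hm_max : ∀ s : ℝ, 0 ≤ s → ∀ i : ℕ, t i ≤ s → i ≤ m s)
    (hm_neg : ∀ s : ℝ, s < 0 → m s = 0)
    (T : ℝ) (hT : 0 < T)
    (Tseq : ℕ → ℝ) (hTseq0 : Tseq 0 = 0)
    (hTseq : ∀ n, Tseq (n + 1) = t (m (Tseq n + T) + 1))
    (Y : ℕ → 𝓨) (H : E → 𝓨 → E)
    (L : 𝓨 → ℝ) (hL_nonneg : ∀ y, 0 ≤ L y)
    (hH_lip : ∀ x₁ x₂ : E, ∀ y : 𝓨, ‖H x₁ y - H x₂ y‖ ≤ L y * ‖x₁ - x₂‖)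
    (Hinf : E → 𝓨 → E) (κ : ℝ → ℝ) (hκ : Tendsto κ atTop (nhds 0))
    (b : E → 𝓨 → E) (Lb : 𝓨 → ℝ) (hLb_nonneg : ∀ y, 0 ≤ Lb y)
    (hHc : ∀ c : ℝ, 1 ≤ c → ∀ x' : E, ∀ y : 𝓨,
      c⁻¹ • H (c • x') y - Hinf x' y = κ c • b x' y)
    (hb_lip : ∀ x₁ x₂ : E, ∀ y : 𝓨, ‖b x₁ y - b x₂ y‖ ≤ Lb y * ‖x₁ - x₂‖)
    (hHinf_lip : ∀ x₁ x₂ : E, ∀ y : 𝓨, ‖Hinf x₁ y - Hinf x₂ y‖ ≤ L y * ‖x₁ - x₂‖)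
    (hLb_sum : ∃ C : ℝ, ∀ n : ℕ, ∀ t₁ t₂ : ℝ, 0 ≤ t₁ → t₁ ≤ t₂ → t₂ ≤ Tseq (n + 1) - Tseq n →
      ∑ i ∈ Finset.Ico (m (Tseq n + t₁)) (m (Tseq n + t₂)), α i * Lb (Y (i + 1)) ≤ C)
    (hb_sum : ∃ x₀ : E, ∃ C : ℝ, ∀ n : ℕ, ∀ s : ℝ, 0 ≤ s → s ≤ T →
      ‖∑ i ∈ Finset.Ico (m (Tseq n)) (m (Tseq n + s)), α i • b x₀ (Y (i + 1))‖ ≤ C) :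
    ∀ B : Set E, IsCompact B → ∀ ε : ℝ, 0 < ε → ∃ c₀ : ℝ, ∀ c : ℝ, c₀ ≤ c → 1 ≤ c →
      ∀ x' ∈ B, ∀ n : ℕ, ∀ s : ℝ, 0 ≤ s → s ≤ T →
        ‖∑ i ∈ Finset.Ico (m (Tseq n)) (m (Tseq n + s)),
            α i • (c⁻¹ • H (c • x') (Y (i + 1)) - Hinf x' (Y (i + 1)))‖ ≤ ε := by

  intro B hB ε hε
  obtain ⟨C₁, hC₁⟩ := hLb_sum
  obtain ⟨x₀, C₂, hC₂⟩ := hb_sum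
  have key : ∀ s : ℝ, 0 ≤ s → s < t (m s + 1) := by
    intro s hs
    by_contra h
    push_neg at h
    have := hm_max s hs _ h
    omega
  have hTn : ∀ n, 0 ≤ Tseq n := by
    intro n
    induction n with
    | zero => rw [hTseq0]
    | succ n ih =>
      have h1 : Tseq n + T < Tseq (n + 1) := by
        rw [hTseq n]; exact key _ (by linarith)
      linarith
  have hwin : ∀ n, Tseq n + T < Tseq (n + 1) := fun n => by
    rw [hTseq n]; exact key _ (by linarith [hTn n])
  have hC₁0 : 0 ≤ C₁ := by
    have := hC₁ 0 0 0 le_rfl le_rfl (by linarith [hwin 0])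
    simpa using this
  have hC₂0 : 0 ≤ C₂ := le_trans (norm_nonneg _) (hC₂ 0 0 le_rfl hT.le)
  obtain ⟨R, hR⟩ := hB.isBounded.exists_norm_le
  set M : ℝ := max (C₂ + C₁ * (R + ‖x₀‖)) 0 + 1 with hM
  have hMpos : 0 < M := by positivity
  obtain ⟨c₀, hc₀⟩ := (Metric.tendsto_atTop.mp hκ (ε / M) (div_pos hε hMpos))
  refine ⟨c₀, fun c hc hc1 x' hx' n s hs hsT => ?_⟩
  have hκc : |κ c| < ε / M := by
    have := hc₀ c hc
    rwa [Real.dist_eq, sub_zero] at this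
  have heq : ∀ i ∈ Finset.Ico (m (Tseq n)) (m (Tseq n + s)),
      α i • (c⁻¹ • H (c • x') (Y (i + 1)) - Hinf x' (Y (i + 1)))
        = κ c • (α i • b x' (Y (i + 1))) := by
    intro i _
    rw [hHc c hc1 x' (Y (i + 1)), smul_comm]
  rw [Finset.sum_congr rfl heq, ← Finset.smul_sum, norm_smul, Real.norm_eq_abs]
  have hd : ‖x' - x₀‖ ≤ R + ‖x₀‖ := by
    have := norm_sub_le x' x₀
    have := hR x' hx'
    linarith
  have hR0 : 0 ≤ R + ‖x₀‖ := le_trans (norm_nonneg _) hd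
  have hSbound : ‖∑ i ∈ Finset.Ico (m (Tseq n)) (m (Tseq n + s)),
      α i • b x' (Y (i + 1))‖ ≤ M := by
    have split : (∑ i ∈ Finset.Ico (m (Tseq n)) (m (Tseq n + s)), α i • b x' (Y (i + 1)))
        = (∑ i ∈ Finset.Ico (m (Tseq n)) (m (Tseq n + s)), α i • b x₀ (Y (i + 1)))
          + ∑ i ∈ Finset.Ico (m (Tseq n)) (m (Tseq n + s)),
              α i • (b x' (Y (i + 1)) - b x₀ (Y (i + 1))) := by
      rw [← Finset.sum_add_distrib]
      exact Finset.sum_congr rfl (fun i _ => by rw [smul_sub]; abel)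
    have h2 : ‖∑ i ∈ Finset.Ico (m (Tseq n)) (m (Tseq n + s)),
        α i • (b x' (Y (i + 1)) - b x₀ (Y (i + 1)))‖ ≤ C₁ * (R + ‖x₀‖) := by
      calc ‖∑ i ∈ Finset.Ico (m (Tseq n)) (m (Tseq n + s)),
              α i • (b x' (Y (i + 1)) - b x₀ (Y (i + 1)))‖
          ≤ ∑ i ∈ Finset.Ico (m (Tseq n)) (m (Tseq n + s)),
              ‖α i • (b x' (Y (i + 1)) - b x₀ (Y (i + 1)))‖ := norm_sum_le _ _
        _ ≤ ∑ i ∈ Finset.Ico (m (Tseq n)) (m (Tseq n + s)),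
              (α i * Lb (Y (i + 1))) * ‖x' - x₀‖ := by
            refine Finset.sum_le_sum (fun i _ => ?_)
            rw [norm_smul, Real.norm_eq_abs, abs_of_pos (hα_pos i), mul_assoc]
            exact mul_le_mul_of_nonneg_left (hb_lip x' x₀ (Y (i + 1))) (hα_pos i).le
        _ = (∑ i ∈ Finset.Ico (m (Tseq n)) (m (Tseq n + s)),
              α i * Lb (Y (i + 1))) * ‖x' - x₀‖ := by rw [Finset.sum_mul]
        _ ≤ C₁ * (R + ‖x₀‖) := by
            refine mul_le_mul ?_ hd (norm_nonneg _) hC₁0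
            have := hC₁ n 0 s le_rfl hs (by linarith [hwin n])
            simpa using this
    have h1 := hC₂ n s hs hsT
    calc ‖∑ i ∈ Finset.Ico (m (Tseq n)) (m (Tseq n + s)), α i • b x' (Y (i + 1))‖
        ≤ C₂ + C₁ * (R + ‖x₀‖) := by
          rw [split]
          exact le_trans (norm_add_le _ _) (add_le_add h1 h2)
      _ ≤ M := by
          rw [hM]
          have := le_max_left (C₂ + C₁ * (R + ‖x₀‖)) 0
          linarith
  calc |κ c| * ‖∑ i ∈ Finset.Ico (m (Tseq n)) (m (Tseq n + s)), α i • b x' (Y (i + 1))‖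
      ≤ (ε / M) * M := mul_le_mul hκc.le hSbound (norm_nonneg _)
        (div_nonneg hε.le hMpos.le)
    _ = ε := div_mul_cancel₀ ε hMpos.ne'
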